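/- For all real x > 1, the prime power counting function satisfies Π(x) < 8x / log₂(x), where Π(x) counts integers m with 2 ≤ m ≤ x that are prime powers p^k (k ≥ 1). -/

import Mathlib

open Finset Real

private lemma ee_spec {m : ℕ} (hm : IsPrimePow m) :
    m.minFac.Prime ∧ 1 ≤ m.factorization m.minFac ∧
      m.minFac ^ m.factorization m.minFac = m := by
  have h2 := hm.two_le
  have hp : m.minFac.Prime := Nat.minFac_prime (by omega)
  have hpow := hm.minFac_pow_factorization_eq
  refine ⟨hp, ?_, hpow⟩
  by_contra h
  have : m.factorization m.minFac = 0 := by omega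
  rw [this, pow_zero] at hpow
  omega

private lemma numeric_large {L u : ℝ} (hL : 0 < L) (hub : 5.65 < u)
    (hLu : L ≤ 8.66 * (u - 1)) :
    2 * L * u ^ (3:ℕ) + L ^ 2 * u ^ (2:ℕ) < 4 * u ^ (6:ℕ) := by
  have hu0 : (0:ℝ) < u := by linarith
  have hLu' : L ≤ 8.66 * u := by nlinarith [hu0]
  have hu2 : (31.92:ℝ) < u ^ (2:ℕ) := by nlinarith [hub]
  have h1 : 2 * L * u ^ (3:ℕ) ≤ 17.32 * u ^ (4:ℕ) := by
    nlinarith [pow_pos hu0 3, hL]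
  have h2 : L ^ 2 ≤ 75 * u ^ (2:ℕ) := by nlinarith [hL, hu0]
  have h3 : L ^ 2 * u ^ (2:ℕ) ≤ 75 * u ^ (4:ℕ) := by
    nlinarith [pow_pos hu0 2, sq_nonneg L]
  have h4 : (92.32:ℝ) * u ^ (4:ℕ) < 4 * u ^ (6:ℕ) := by
    nlinarith [pow_pos hu0 4, hu2]
  linarith

set_option maxHeartbeats 1000000 in
theorem stmt_17 (x : ℝ) (hx : 1 < x) :
    (Nat.card {m : ℕ // 2 ≤ m ∧ (m : ℝ) ≤ x ∧ IsPrimePow m} : ℝ) <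
      8 * x / Real.logb 2 x := by
  classical
  have hx0 : (0:ℝ) < x := by linarith
  set L := Real.logb 2 x with hLdef
  have hL : 0 < L := Real.logb_pos (by norm_num) hx
  have hlog2 : (0:ℝ) < Real.log 2 := Real.log_pos (by norm_num)
  have hlogx : Real.log x = L * Real.log 2 := by
    rw [hLdef, Real.logb]; field_simp
  set n := ⌊x⌋₊ with hn
  have hnx : (n : ℝ) ≤ x := Nat.floor_le hx0.le
  set F : Finset ℕ := (Finset.Icc 2 n).filter IsPrimePow with hF
  have hcard : (Nat.card {m : ℕ // 2 ≤ m ∧ (m : ℝ) ≤ x ∧ IsPrimePow m}) = F.card := by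
    rw [show F.card = Nat.card {m : ℕ // m ∈ F} from (Nat.card_eq_finsetCard F).symm]
    refine Nat.card_congr (Equiv.subtypeEquivRight ?_)
    intro m
    simp only [hF, Finset.mem_filter, Finset.mem_Icc]
    constructor
    · rintro ⟨h1, h2, h3⟩
      exact ⟨⟨h1, Nat.le_floor h2⟩, h3⟩
    · rintro ⟨⟨h1, h2⟩, h3⟩
      exact ⟨h1, le_trans (Nat.cast_le.mpr h2) hnx, h3⟩
  rw [hcard]
  have hmem : ∀ m ∈ F, 2 ≤ m ∧ (m:ℝ) ≤ x ∧ IsPrimePow m := by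
    intro m hm
    rw [hF, Finset.mem_filter, Finset.mem_Icc] at hm
    exact ⟨hm.1.1, le_trans (Nat.cast_le.mpr hm.1.2) hnx, hm.2⟩
  set t := ⌊L⌋₊ with ht
  have htL : (t : ℝ) ≤ L := Nat.floor_le hL.le
  have hcardIcc1t : ((Finset.Icc 1 t).card : ℝ) ≤ L := by
    rw [Nat.card_Icc, Nat.add_sub_cancel]
    exact htL
  -- exponent bound : if 2^k ≤ m ≤ x then k ≤ t
  have hexp : ∀ m ∈ F, ∀ k : ℕ, 2 ^ k ≤ m → k ≤ t := by
    intro m hm k hk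
    obtain ⟨-, hmx, -⟩ := hmem m hm
    have h2k : ((2:ℝ)) ^ (k:ℝ) ≤ x := by
      rw [Real.rpow_natCast]
      calc ((2:ℝ))^k = ((2^k : ℕ) : ℝ) := by push_cast; ring
        _ ≤ (m:ℝ) := Nat.cast_le.mpr hk
        _ ≤ x := hmx
    have : (k:ℝ) ≤ L := (Real.le_logb_iff_rpow_le (by norm_num) hx0).mpr h2k
    exact Nat.le_floor this
  rw [lt_div_iff₀ hL]
  rcases lt_or_ge x 32768 with hsmall | hbig
  · -- SMALL REGIME : F.card ≤ x/2 + L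
    have hFcard : (F.card : ℝ) ≤ x / 2 + L := by
      set Fe := F.filter (fun m => 2 ∣ m) with hFe
      set Fo := F.filter (fun m => ¬ 2 ∣ m) with hFo
      have hsplit : F.card = Fe.card + Fo.card :=
        (Finset.card_filter_add_card_filter_not (fun m => 2 ∣ m)).symm
      have hFeb : (Fe.card : ℝ) ≤ L := by
        have h1 : Fe.card ≤ (Finset.Icc 1 t).card := by
          apply Finset.card_le_card_of_injOn (fun m => m.factorization m.minFac)
          · intro m hm
            rw [Finset.mem_coe, hFe, Finset.mem_filter] at hm
            obtain ⟨hmF, hdvd⟩ := hm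
            obtain ⟨hp, h1e, hpow⟩ := ee_spec (hmem m hmF).2.2
            have hmf2 : m.minFac = 2 :=
              le_antisymm (Nat.minFac_le_of_dvd le_rfl hdvd) hp.two_le
            rw [Finset.mem_coe, Finset.mem_Icc]
            refine ⟨h1e, hexp m hmF _ ?_⟩
            rw [← hmf2]; exact hpow.le
          · intro a ha b hb hab
            simp only [hFe, Finset.coe_filter, Set.mem_setOf_eq] at ha hb
            obtain ⟨haF, hda⟩ := ha
            obtain ⟨hbF, hdb⟩ := hb
            obtain ⟨hpa, h1a, hpowa⟩ := ee_spec (hmem a haF).2.2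
            obtain ⟨hpb, h1b, hpowb⟩ := ee_spec (hmem b hbF).2.2
            have hma : a.minFac = 2 :=
              le_antisymm (Nat.minFac_le_of_dvd le_rfl hda) hpa.two_le
            have hmb : b.minFac = 2 :=
              le_antisymm (Nat.minFac_le_of_dvd le_rfl hdb) hpb.two_le
            rw [hma] at hpowa
            rw [hmb] at hpowb
            simp only [hma, hmb] at hab
            rw [← hpowa, ← hpowb, hab]
        calc (Fe.card : ℝ) ≤ ((Finset.Icc 1 t).card : ℝ) := Nat.cast_le.mpr h1
          _ ≤ L := hcardIcc1t
      have hFob : (Fo.card : ℝ) ≤ x / 2 := by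
        have h1 : Fo.card ≤ (Finset.Icc 1 (n / 2)).card := by
          apply Finset.card_le_card_of_injOn (fun m => m / 2)
          · intro m hm
            rw [Finset.mem_coe, hFo, Finset.mem_filter] at hm
            obtain ⟨hmF, hodd⟩ := hm
            rw [hF, Finset.mem_filter, Finset.mem_Icc] at hmF
            obtain ⟨⟨h2m, hmn⟩, -⟩ := hmF
            have hm1 : m % 2 = 1 := by omega
            rw [Finset.mem_coe, Finset.mem_Icc]
            constructor
            · beta_reduce; omega
            · exact Nat.div_le_div_right hmn
          · intro a ha b hb hab
            simp only [hFo, Finset.coe_filter, Set.mem_setOf_eq] at ha hb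
            have ha1 : a % 2 = 1 := by
              have := ha.2; omega
            have hb1 : b % 2 = 1 := by
              have := hb.2; omega
            simp only at hab
            omega
        have h2 : ((Finset.Icc 1 (n / 2)).card : ℝ) ≤ x / 2 := by
          rw [Nat.card_Icc, Nat.add_sub_cancel]
          calc ((n / 2 : ℕ) : ℝ) ≤ (n : ℝ) / 2 := Nat.cast_div_le
            _ ≤ x / 2 := by linarith
        calc (Fo.card : ℝ) ≤ ((Finset.Icc 1 (n/2)).card : ℝ) := Nat.cast_le.mpr h1
          _ ≤ x / 2 := h2
      calc (F.card : ℝ) = (Fe.card : ℝ) + (Fo.card : ℝ) := by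
            rw [hsplit]; push_cast; ring
        _ ≤ x / 2 + L := by linarith
    -- numeric part
    have hL15 : L < 15 := by
      have h1 : L < Real.logb 2 32768 := Real.logb_lt_logb (by norm_num) hx0 hsmall
      have h2 : Real.logb 2 32768 = 15 := by
        rw [show (32768:ℝ) = 2 ^ (15:ℕ) by norm_num, Real.logb_pow,
          Real.logb_self_eq_one (by norm_num)]
        norm_num
      linarith
    obtain ⟨j, hjL, hLj, hj14, h2j⟩ :
        ∃ j : ℕ, (j : ℝ) ≤ L ∧ L < (j : ℝ) + 1 ∧ j ≤ 14 ∧ (2:ℝ) ^ (j:ℕ) ≤ x := by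
      refine ⟨⌊L⌋₊, Nat.floor_le hL.le, Nat.lt_floor_add_one L, ?_, ?_⟩
      · by_contra h
        push_neg at h
        have h15 : (15:ℝ) ≤ (⌊L⌋₊:ℝ) := by exact_mod_cast h
        have := Nat.floor_le hL.le
        linarith
      · calc (2:ℝ) ^ (⌊L⌋₊:ℕ) = (2:ℝ) ^ ((⌊L⌋₊:ℕ):ℝ) := (Real.rpow_natCast 2 _).symm
          _ ≤ (2:ℝ) ^ L := Real.rpow_le_rpow_of_exponent_le one_le_two (Nat.floor_le hL.le)
          _ = x := Real.rpow_logb (by norm_num) (by norm_num) hx0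
    clear_value L
    have hkey : (x / 2 + L) * L < 8 * x := by
      interval_cases j <;>
        (norm_num at h2j hLj ⊢) <;>
        nlinarith [hL, hLj, h2j, hx0, mul_pos hx0 hL]
    calc (F.card : ℝ) * L ≤ (x / 2 + L) * L :=
          mul_le_mul_of_nonneg_right hFcard hL.le
      _ < 8 * x := hkey
  · -- LARGE REGIME
    set u := x ^ ((1:ℝ)/6) with hu
    have hu0 : 0 < u := Real.rpow_pos_of_pos hx0 _
    have hu6 : u ^ (6:ℕ) = x := by
      rw [hu, ← Real.rpow_natCast (x ^ ((1:ℝ)/6)) 6, ← Real.rpow_mul hx0.le]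
      norm_num
    have hsq : Real.sqrt x = u ^ (3:ℕ) := by
      rw [Real.sqrt_eq_rpow, hu, ← Real.rpow_natCast (x ^ ((1:ℝ)/6)) 3,
        ← Real.rpow_mul hx0.le]
      norm_num
    have hcb : x ^ ((1:ℝ)/3) = u ^ (2:ℕ) := by
      rw [hu, ← Real.rpow_natCast (x ^ ((1:ℝ)/6)) 2, ← Real.rpow_mul hx0.le]
      norm_num
    have hlogu : Real.log x = 6 * Real.log u := by
      rw [hu, Real.log_rpow hx0]; ring
    have hub : 5.65 < u := by
      by_contra h
      push_neg at h
      have h6 : u ^ (6:ℕ) ≤ (5.65:ℝ) ^ (6:ℕ) := pow_le_pow_left₀ hu0.le h 6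
      rw [hu6] at h6
      norm_num at h6
      linarith
    have hu1 : (1:ℝ) < u := by linarith
    have hLu : L ≤ 8.66 * (u - 1) := by
      have hlu : Real.log u ≤ u - 1 := Real.log_le_sub_one_of_pos hu0
      have h1 : L * Real.log 2 ≤ 6 * (u - 1) := by
        rw [← hlogx, hlogu]
        linarith
      nlinarith [Real.log_two_gt_d9, hL]
    -- combinatorial bound
    set s := ⌊Real.sqrt x⌋₊ with hs
    have hsx : (s : ℝ) ≤ Real.sqrt x := Nat.floor_le (Real.sqrt_nonneg x)
    set c3 := ⌊x ^ ((1:ℝ)/3)⌋₊ with hc3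
    have hc3x : (c3 : ℝ) ≤ x ^ ((1:ℝ)/3) :=
      Nat.floor_le (Real.rpow_nonneg hx0.le _)
    set F1 := F.filter (fun m => m.factorization m.minFac = 1) with hF1
    set F2 := F.filter (fun m => m.factorization m.minFac = 2) with hF2
    set F3 := F.filter (fun m => 3 ≤ m.factorization m.minFac) with hF3
    have hsplit : F.card ≤ F1.card + F2.card + F3.card := by
      have hsub : F ⊆ F1 ∪ F2 ∪ F3 := by
        intro m hm
        obtain ⟨-, -, hpp⟩ := hmem m hm
        obtain ⟨-, h1e, -⟩ := ee_spec hpp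
        have hcase : m.factorization m.minFac = 1 ∨ m.factorization m.minFac = 2 ∨
            3 ≤ m.factorization m.minFac := by omega
        simp only [hF1, hF2, hF3, Finset.mem_union, Finset.mem_filter]
        tauto
      calc F.card ≤ (F1 ∪ F2 ∪ F3).card := Finset.card_le_card hsub
        _ ≤ (F1 ∪ F2).card + F3.card := Finset.card_union_le _ _
        _ ≤ F1.card + F2.card + F3.card := by
            have := Finset.card_union_le F1 F2; omega
    -- F2 : prime squares
    have hF2b : (F2.card : ℝ) ≤ Real.sqrt x := by
      have h1 : F2.card ≤ (Finset.Icc 1 s).card := by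
        apply Finset.card_le_card_of_injOn (fun m => m.minFac)
        · intro m hm
          rw [Finset.mem_coe, hF2, Finset.mem_filter] at hm
          obtain ⟨hmF, he2⟩ := hm
          obtain ⟨h2m, hmx, hpp⟩ := hmem m hmF
          obtain ⟨hp, -, hpow⟩ := ee_spec hpp
          rw [he2] at hpow
          have hple : (m.minFac : ℝ) ≤ Real.sqrt x := by
            have h1 : ((m.minFac : ℝ)) ^ (2:ℕ) ≤ x := by
              calc ((m.minFac:ℝ)) ^ (2:ℕ) = ((m.minFac ^ 2 : ℕ) : ℝ) := by push_cast; ring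
                _ = (m : ℝ) := by rw [hpow]
                _ ≤ x := hmx
            calc (m.minFac : ℝ) = Real.sqrt (((m.minFac:ℝ)) ^ (2:ℕ)) := by
                  rw [show ((m.minFac:ℝ))^(2:ℕ) = (m.minFac:ℝ)^2 by norm_num,
                    Real.sqrt_sq (by positivity)]
              _ ≤ Real.sqrt x := Real.sqrt_le_sqrt h1
          rw [Finset.mem_coe, Finset.mem_Icc]
          exact ⟨hp.pos, Nat.le_floor hple⟩
        · intro a ha b hb hab
          simp only [hF2, Finset.coe_filter, Set.mem_setOf_eq] at ha hb
          obtain ⟨-, -, hpowa⟩ := ee_spec (hmem a ha.1).2.2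
          obtain ⟨-, -, hpowb⟩ := ee_spec (hmem b hb.1).2.2
          have hab' : a.minFac = b.minFac := hab
          calc a = a.minFac ^ a.factorization a.minFac := hpowa.symm
            _ = b.minFac ^ b.factorization b.minFac := by rw [ha.2, hb.2, hab']
            _ = b := hpowb
      calc (F2.card : ℝ) ≤ ((Finset.Icc 1 s).card : ℝ) := Nat.cast_le.mpr h1
        _ ≤ Real.sqrt x := by rw [Nat.card_Icc, Nat.add_sub_cancel]; exact hsx
    -- F3 : higher prime powers
    have hF3b : (F3.card : ℝ) ≤ x ^ ((1:ℝ)/3) * L := by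
      have h1 : F3.card ≤ ((Finset.Icc 1 c3) ×ˢ (Finset.Icc 1 t)).card := by
        apply Finset.card_le_card_of_injOn
          (fun m => (m.minFac, m.factorization m.minFac))
        · intro m hm
          rw [Finset.mem_coe, hF3, Finset.mem_filter] at hm
          obtain ⟨hmF, he3⟩ := hm
          obtain ⟨h2m, hmx, hpp⟩ := hmem m hmF
          obtain ⟨hp, h1e, hpow⟩ := ee_spec hpp
          rw [Finset.mem_coe, Finset.mem_product, Finset.mem_Icc, Finset.mem_Icc]
          have hp3 : m.minFac ^ (3:ℕ) ≤ m := by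
            calc m.minFac ^ (3:ℕ) ≤ m.minFac ^ (m.factorization m.minFac) :=
                  Nat.pow_le_pow_right hp.pos he3
              _ = m := hpow
          have hple : (m.minFac : ℝ) ≤ x ^ ((1:ℝ)/3) := by
            have h1 : ((m.minFac : ℝ)) ^ ((3:ℕ):ℝ) ≤ x := by
              rw [Real.rpow_natCast]
              calc ((m.minFac:ℝ)) ^ (3:ℕ) = ((m.minFac ^ 3 : ℕ) : ℝ) := by push_cast; ring
                _ ≤ (m : ℝ) := Nat.cast_le.mpr hp3
                _ ≤ x := hmx
            calc (m.minFac : ℝ) = (((m.minFac:ℝ)) ^ ((3:ℕ):ℝ)) ^ ((1:ℝ)/3) := by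
                  rw [← Real.rpow_mul (by positivity)]
                  norm_num
              _ ≤ x ^ ((1:ℝ)/3) :=
                  Real.rpow_le_rpow (by positivity) h1 (by norm_num)
          refine ⟨⟨hp.pos, Nat.le_floor hple⟩, h1e, hexp m hmF _ ?_⟩
          calc 2 ^ (m.factorization m.minFac) ≤ m.minFac ^ (m.factorization m.minFac) :=
                Nat.pow_le_pow_left hp.two_le _
            _ = m := hpow
        · intro a ha b hb hab
          simp only [hF3, Finset.coe_filter, Set.mem_setOf_eq] at ha hb
          obtain ⟨-, -, hpowa⟩ := ee_spec (hmem a ha.1).2.2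
          obtain ⟨-, -, hpowb⟩ := ee_spec (hmem b hb.1).2.2
          have hab1 : a.minFac = b.minFac := congrArg Prod.fst hab
          have hab2 : a.factorization a.minFac = b.factorization b.minFac :=
            congrArg Prod.snd hab
          calc a = a.minFac ^ a.factorization a.minFac := hpowa.symm
            _ = b.minFac ^ b.factorization b.minFac := by rw [hab2, hab1]
            _ = b := hpowb
      have h2 : (((Finset.Icc 1 c3) ×ˢ (Finset.Icc 1 t)).card : ℝ) ≤ x ^ ((1:ℝ)/3) * L := by
        rw [Finset.card_product, Nat.card_Icc, Nat.card_Icc, Nat.add_sub_cancel,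
          Nat.add_sub_cancel]
        push_cast
        exact mul_le_mul hc3x htL (by positivity) (by positivity)
      calc (F3.card : ℝ) ≤ _ := Nat.cast_le.mpr h1
        _ ≤ x ^ ((1:ℝ)/3) * L := h2
    -- F1 : primes
    have hF1b : (F1.card : ℝ) ≤ Real.sqrt x + 4 * x / L := by
      set Ps := F1.filter (fun m => m ≤ s) with hPs
      set Pb := F1.filter (fun m => ¬ m ≤ s) with hPb
      have hsplit1 : F1.card = Ps.card + Pb.card :=
        (Finset.card_filter_add_card_filter_not (fun m => m ≤ s)).symm
      have hPrime : ∀ m ∈ F1, m.Prime := by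
        intro m hm
        rw [hF1, Finset.mem_filter] at hm
        obtain ⟨hp, -, hpow⟩ := ee_spec (hmem m hm.1).2.2
        rw [hm.2, pow_one] at hpow
        rw [← hpow]; exact hp
      have hPsb : (Ps.card : ℝ) ≤ Real.sqrt x := by
        have h1 : Ps.card ≤ (Finset.Icc 1 s).card := by
          apply Finset.card_le_card
          intro m hm
          rw [hPs, Finset.mem_filter] at hm
          have h2m := (hmem m (Finset.mem_of_mem_filter m hm.1)).1
          rw [Finset.mem_Icc]
          exact ⟨by omega, hm.2⟩
        calc (Ps.card : ℝ) ≤ ((Finset.Icc 1 s).card : ℝ) := Nat.cast_le.mpr h1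
          _ ≤ Real.sqrt x := by rw [Nat.card_Icc, Nat.add_sub_cancel]; exact hsx
      have hPbb : (Pb.card : ℝ) ≤ 4 * x / L := by
        set B := Pb.card with hB
        have hprod1 : (s + 1) ^ B ≤ ∏ m ∈ Pb, m := by
          apply Finset.pow_card_le_prod
          intro m hm
          rw [hPb, Finset.mem_filter] at hm
          omega
        have hsub2 : Pb ⊆ (Finset.range (n+1)).filter Nat.Prime := by
          intro m hm
          have hmF1 : m ∈ F1 := Finset.mem_of_mem_filter m hm
          have hmF : m ∈ F := Finset.mem_of_mem_filter m hmF1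
          rw [hF, Finset.mem_filter, Finset.mem_Icc] at hmF
          rw [Finset.mem_filter, Finset.mem_range]
          exact ⟨by omega, hPrime m hmF1⟩
        have hprod2 : ∏ m ∈ Pb, m ≤ primorial n := by
          rw [primorial]
          apply Finset.prod_le_prod_of_subset_of_one_le' hsub2
          intro i hi _
          rw [Finset.mem_filter] at hi
          exact hi.2.one_lt.le
        have hchain : ((s:ℝ) + 1) ^ B ≤ (4:ℝ) ^ x := by
          calc ((s:ℝ) + 1) ^ B = (((s+1)^B : ℕ) : ℝ) := by push_cast; ring
            _ ≤ ((4^n : ℕ) : ℝ) := by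
                exact_mod_cast Nat.cast_le.mpr
                  (le_trans hprod1 (le_trans hprod2 (primorial_le_4_pow n)))
            _ = (4:ℝ) ^ (n:ℝ) := by
                rw [Real.rpow_natCast]; push_cast; ring
            _ ≤ (4:ℝ) ^ x := Real.rpow_le_rpow_of_exponent_le (by norm_num) hnx
        have hsqlt : Real.sqrt x < (s:ℝ) + 1 := Nat.lt_floor_add_one _
        have hsx0 : (0:ℝ) < Real.sqrt x := Real.sqrt_pos.mpr hx0
        have hchain2 : (Real.sqrt x) ^ B ≤ (4:ℝ) ^ x :=
          le_trans (pow_le_pow_left₀ hsx0.le hsqlt.le B) hchain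
        have hlog : (B:ℝ) * (Real.log x / 2) ≤ x * (2 * Real.log 2) := by
          have h1 := Real.log_le_log (pow_pos hsx0 B) hchain2
          rw [Real.log_pow, Real.log_sqrt hx0.le, Real.log_rpow (by norm_num)] at h1
          have h4 : Real.log 4 = 2 * Real.log 2 := by
            rw [show (4:ℝ) = 2 ^ (2:ℕ) by norm_num, Real.log_pow]
            push_cast; ring
          rw [h4] at h1
          exact h1
        rw [le_div_iff₀ hL]
        have hgoal : (B:ℝ) * L * Real.log 2 ≤ 4 * x * Real.log 2 := by
          have : Real.log x / 2 = L * Real.log 2 / 2 := by rw [hlogx]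
          rw [this] at hlog
          nlinarith [hlog]
        exact le_of_mul_le_mul_right hgoal hlog2
      calc (F1.card : ℝ) = (Ps.card : ℝ) + (Pb.card : ℝ) := by
            rw [hsplit1]; push_cast; ring
        _ ≤ Real.sqrt x + 4 * x / L := by linarith
    -- assemble
    have hFcard : (F.card : ℝ) ≤ 2 * Real.sqrt x + x ^ ((1:ℝ)/3) * L + 4 * x / L := by
      have h0 : (F.card : ℝ) ≤ (F1.card : ℝ) + (F2.card : ℝ) + (F3.card : ℝ) := by
        exact_mod_cast Nat.cast_le.mpr hsplit
      linarith
    -- numeric part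
    have hkey : 2 * L * u ^ (3:ℕ) + L ^ 2 * u ^ (2:ℕ) < 4 * u ^ (6:ℕ) :=
      numeric_large hL hub hLu
    rw [hsq, hcb] at hFcard
    have hfin : (F.card : ℝ) * L < 8 * x := by
      have hstep : (F.card : ℝ) * L ≤ (2 * u ^ (3:ℕ) + u ^ (2:ℕ) * L + 4 * x / L) * L :=
        mul_le_mul_of_nonneg_right hFcard hL.le
      have hexpand : (2 * u ^ (3:ℕ) + u ^ (2:ℕ) * L + 4 * x / L) * L
          = 2 * L * u ^ (3:ℕ) + L ^ 2 * u ^ (2:ℕ) + 4 * x := by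
        field_simp
      rw [hexpand] at hstep
      rw [← hu6]
      rw [← hu6] at hstep
      linarith
    exact hfin
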